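/- Let ã and v be finitely supported ℤ₂-valued 0-cochains on the cubical lattice ℤ². Then, in ℤ₂, ∫ ((ã+v) ∪ δ(ã+v)) ∪ δ(ã+v) + ∫ (ã ∪ δã) ∪ δã = ∫ [ (δã ∪ v) ∪ δã + δv ∪_1 ((δã + δv) ∪ δã) + (δã ∪ δv) ∪ v + (v ∪ δv) ∪ δv ], where ∫ denotes the sum of a 2-cochain over all 2-cells of the lattice and all triple cup products are parenthesized as written. -/

import Mathlib

/-- The three possible entries of a cell label of the hypercube:
`dot` = `•` (a spanned direction), `pls` = `+`, `mns` = `−`. -/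
inductive Sgn : Type
  | dot : Sgn
  | pls : Sgn
  | mns : Sgn
  deriving DecidableEq

instance instFintypeSgn : Fintype Sgn :=
  ⟨{Sgn.dot, Sgn.pls, Sgn.mns}, fun x => by cases x <;> simp⟩

/-- A cell of the `d`-dimensional hypercube, labeled by a tuple in `{•,+,−}^d`. -/
abbrev Cell (d : ℕ) := Fin d → Sgn

/-- A `ℤ₂`-cochain on the `d`-dimensional hypercube. -/
abbrev Cochain (d : ℕ) := Cell d → ZMod 2

/-- The top cell `(•,…,•)`. -/
def topCell (d : ℕ) : Cell d := fun _ => Sgn.dot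

/-- The set of coordinates of a cell labeled `•`. -/
def dots {d : ℕ} (w : Cell d) : Finset (Fin d) :=
  Finset.univ.filter (fun j => w j = Sgn.dot)

/-- The coboundary of a `ℤ₂`-cochain: `(δα)(w)` is the sum of `α` over all cells obtained
from `w` by replacing exactly one entry equal to `•` by `+` or by `−`. -/
def delta {d : ℕ} (α : Cochain d) : Cochain d := fun w =>
  ∑ j ∈ dots w, (α (Function.update w j Sgn.pls) + α (Function.update w j Sgn.mns))

/-- The set of coordinates where both `z` and `z'` are `•`. -/
def bothDot {d : ℕ} (z z' : Cell d) : Finset (Fin d) :=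
  Finset.univ.filter (fun j => z j = Sgn.dot ∧ z' j = Sgn.dot)

/-- The allowed values of `(z_j, z'_j)` at a coordinate `j` not in the common-`•` set `I`:
`(+,•)` or `(•,−)` when `ℓ(j) = #{i ∈ I : i < j}` is even, and `(−,•)` or `(•,+)` when it
is odd. -/
def pairCond {d : ℕ} (I : Finset (Fin d)) (j : Fin d) (a b : Sgn) : Prop :=
  if (I.filter (fun i => i < j)).card % 2 = 0 then
    (a = Sgn.pls ∧ b = Sgn.dot) ∨ (a = Sgn.dot ∧ b = Sgn.mns)
  else
    (a = Sgn.mns ∧ b = Sgn.dot) ∨ (a = Sgn.dot ∧ b = Sgn.pls)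

/-- The pairs `(z,z')` appearing in the `m`-th higher cup product evaluated on the cell `w`:
the entries of `w` equal to `+` or `−` are fixed in both arguments, there are exactly `m`
coordinates where both `z` and `z'` are `•`, and at the remaining `•`-coordinates of `w`
the parity condition `pairCond` holds. -/
def IntPair {d : ℕ} (m : ℕ) (w z z' : Cell d) : Prop :=
  (∀ j, w j ≠ Sgn.dot → z j = w j ∧ z' j = w j) ∧
    (bothDot z z').card = m ∧
    ∀ j, w j = Sgn.dot → j ∉ bothDot z z' → pairCond (bothDot z z') j (z j) (z' j)

open Classical in
/-- The finite set of pairs in `Int_m` relative to the cell `w`. -/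
noncomputable def intPairs {d : ℕ} (m : ℕ) (w : Cell d) : Finset (Cell d × Cell d) :=
  Finset.univ.filter (fun p => IntPair m w p.1 p.2)

/-- The higher cup product `α ∪_m β` of `ℤ₂`-cochains:
`(α ∪_m β)(w) = Σ_{(z,z') ∈ Int_m(w)} α(z)·β(z')`. -/
noncomputable def cup {d : ℕ} (m : ℕ) (α β : Cochain d) : Cochain d := fun w =>
  ∑ p ∈ intPairs m w, α p.1 * β p.2

/-- A point of the cubical lattice `ℤ^d`. -/
abbrev Pt (d : ℕ) := Fin d → ℤ

/-- A cell of the cubical lattice `ℤ^d`: a pair `(x, S)` with `x ∈ ℤ^d` and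
`S ⊆ {1,…,d}`, representing `∏_{i∈S}[x_i, x_i+1] × ∏_{i∉S}{x_i}`;
its dimension is `|S|`, and a `d`-cube is a cell with `S = univ`. -/
abbrev LatCell (d : ℕ) := Pt d × Finset (Fin d)

/-- A `ℤ₂`-cochain on the cubical lattice `ℤ^d`. -/
abbrev LatCochain (d : ℕ) := LatCell d → ZMod 2

/-- The pairs `(z,z')` of tuples in `{•,+,−}^d` appearing in the `m`-th higher cup product
evaluated on a cell with spanned directions `S`: entries outside `S` are a fixed dummy
value (`+`, irrelevant to the evaluated subcells), there are exactly `m` coordinates where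
both `z` and `z'` are `•`, and at the remaining coordinates of `S` the parity condition
`pairCond` of `Int_m` holds. -/
def IntPairS {d : ℕ} (m : ℕ) (S : Finset (Fin d)) (z z' : Fin d → Sgn) : Prop :=
  (∀ j ∉ S, z j = Sgn.pls ∧ z' j = Sgn.pls) ∧
    (bothDot z z').card = m ∧
    ∀ j ∈ S, j ∉ bothDot z z' → pairCond (bothDot z z') j (z j) (z' j)

/-- The subcell of the lattice cell `(x, S)` determined by the tuple `z` on the spanned
directions `S`: direction `j ∈ S` with `z j = •` stays spanned, `z j = +` picks the larger
face (coordinate `x j + 1`), `z j = −` picks the smaller face (coordinate `x j`);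
coordinates outside `S` are held fixed. -/
def cellFrom {d : ℕ} (x : Pt d) (S : Finset (Fin d)) (z : Fin d → Sgn) : LatCell d :=
  (fun j => if j ∈ S ∧ z j = Sgn.pls then x j + 1 else x j,
    S.filter (fun j => z j = Sgn.dot))

open Classical in
/-- The higher cup product `α ∪_m β` of `ℤ₂`-cochains on the cubical lattice `ℤ^d`,
evaluated on each cell via the identification of its subcells with tuples in `{•,+,−}^d`,
using the hypercubic formula `(α ∪_m β)(w) = Σ_{(z,z') ∈ Int_m} α(z) β(z')`. -/
noncomputable def latCup {d : ℕ} (m : ℕ) (α β : LatCochain d) : LatCochain d := fun w =>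
  ∑ p ∈ (Finset.univ.filter
      (fun p : (Fin d → Sgn) × (Fin d → Sgn) => IntPairS m w.2 p.1 p.2)),
    α (cellFrom w.1 w.2 p.1) * β (cellFrom w.1 w.2 p.2)

/-- Coboundary of a lattice `ℤ₂`-cochain: `(δα)(w)` is the sum of `α` over the boundary
cells of `w` (the cells obtained by unspanning one direction of `w` to its smaller or
larger face). -/
def latDelta {d : ℕ} (α : LatCochain d) : LatCochain d := fun w =>
  ∑ j ∈ w.2,
    (α (w.1, w.2.erase j) + α (Function.update w.1 j (w.1 j + 1), w.2.erase j))

/-- The indicator cochain of a lattice cell. -/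
def indLat {d : ℕ} (c : LatCell d) : LatCochain d := fun w => if w = c then 1 else 0

/-- `∫γ`: the sum of the values of a lattice cochain over all `d`-cubes of the lattice
(as a `finsum`; the cochains to which this is applied have finite support). -/
noncomputable def intLat {d : ℕ} (α : LatCochain d) : ZMod 2 :=
  ∑ᶠ x : Pt d, α (x, Finset.univ)

/-- The lattice `ℤ₂`-cochain determined by a `0`-cochain (a function on vertices). -/
def ofVertex {d : ℕ} (a : Pt d → ZMod 2) : LatCochain d := fun w =>
  if w.2 = ∅ then a w.1 else 0

/- ------------------------------------------------------------------ -/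
/- Auxiliary development                                               -/
/- ------------------------------------------------------------------ -/

instance decPairCond {d : ℕ} (I : Finset (Fin d)) (j : Fin d) (a b : Sgn) :
    Decidable (pairCond I j a b) := by
  unfold pairCond; infer_instance

instance decIntPairS {d m : ℕ} (S : Finset (Fin d)) (z z' : Fin d → Sgn) :
    Decidable (IntPairS m S z z') := by
  unfold IntPairS; infer_instance

open Sgn Finset Function

/-- Shift vectors. -/
def e10 : Pt 2 := ![1, 0]
def e01 : Pt 2 := ![0, 1]
def e11 : Pt 2 := ![1, 1]

@[simp] lemma add_e10_e01 (x : Pt 2) : x + e10 + e01 = x + e11 := by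
  funext j; fin_cases j <;>
    simp [e10, e01, e11, Matrix.vecHead, Matrix.vecTail] <;> ring

@[simp] lemma add_e01_e10 (x : Pt 2) : x + e01 + e10 = x + e11 := by
  funext j; fin_cases j <;>
    simp [e10, e01, e11, Matrix.vecHead, Matrix.vecTail] <;> ring

/-- A helper to compute `cellFrom`. -/
lemma cellFrom_eq (x : Pt 2) (S : Finset (Fin 2)) (z : Fin 2 → Sgn) (pt : Pt 2)
    (S' : Finset (Fin 2))
    (hp : ∀ j, (if j ∈ S ∧ z j = Sgn.pls then x j + 1 else x j) = pt j)
    (hS : S.filter (fun j => z j = Sgn.dot) = S') :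
    cellFrom x S z = (pt, S') := by
  unfold cellFrom; exact Prod.ext (funext hp) hS

@[simp] lemma cf_u_pp (x : Pt 2) : cellFrom x Finset.univ ![pls, pls] = (x + e11, ∅) :=
  cellFrom_eq _ _ _ _ _ (fun j => by fin_cases j <;> simp [e11]) (by decide)
@[simp] lemma cf_u_pd (x : Pt 2) : cellFrom x Finset.univ ![pls, dot] = (x + e10, {1}) :=
  cellFrom_eq _ _ _ _ _ (fun j => by fin_cases j <;> simp [e10]) (by decide)
@[simp] lemma cf_u_dp (x : Pt 2) : cellFrom x Finset.univ ![dot, pls] = (x + e01, {0}) :=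
  cellFrom_eq _ _ _ _ _ (fun j => by fin_cases j <;> simp [e01]) (by decide)
@[simp] lemma cf_u_dd (x : Pt 2) : cellFrom x Finset.univ ![dot, dot] = (x, Finset.univ) :=
  cellFrom_eq _ _ _ _ _ (fun j => by fin_cases j <;> simp) (by decide)
@[simp] lemma cf_u_dm (x : Pt 2) : cellFrom x Finset.univ ![dot, mns] = (x, {0}) :=
  cellFrom_eq _ _ _ _ _ (fun j => by fin_cases j <;> simp) (by decide)
@[simp] lemma cf_u_md (x : Pt 2) : cellFrom x Finset.univ ![mns, dot] = (x, {1}) :=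
  cellFrom_eq _ _ _ _ _ (fun j => by fin_cases j <;> simp) (by decide)
@[simp] lemma cf_u_mm (x : Pt 2) : cellFrom x Finset.univ ![mns, mns] = (x, ∅) :=
  cellFrom_eq _ _ _ _ _ (fun j => by fin_cases j <;> simp) (by decide)
@[simp] lemma cf_0_pp (x : Pt 2) : cellFrom x {0} ![pls, pls] = (x + e10, ∅) :=
  cellFrom_eq _ _ _ _ _ (fun j => by fin_cases j <;> simp [e10]) (by decide)
@[simp] lemma cf_0_dp (x : Pt 2) : cellFrom x {0} ![dot, pls] = (x, {0}) :=
  cellFrom_eq _ _ _ _ _ (fun j => by fin_cases j <;> simp) (by decide)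
@[simp] lemma cf_0_mp (x : Pt 2) : cellFrom x {0} ![mns, pls] = (x, ∅) :=
  cellFrom_eq _ _ _ _ _ (fun j => by fin_cases j <;> simp) (by decide)
@[simp] lemma cf_1_pp (x : Pt 2) : cellFrom x {1} ![pls, pls] = (x + e01, ∅) :=
  cellFrom_eq _ _ _ _ _ (fun j => by fin_cases j <;> simp [e01]) (by decide)
@[simp] lemma cf_1_pd (x : Pt 2) : cellFrom x {1} ![pls, dot] = (x, {1}) :=
  cellFrom_eq _ _ _ _ _ (fun j => by fin_cases j <;> simp) (by decide)
@[simp] lemma cf_1_pm (x : Pt 2) : cellFrom x {1} ![pls, mns] = (x, ∅) :=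
  cellFrom_eq _ _ _ _ _ (fun j => by fin_cases j <;> simp) (by decide)
@[simp] lemma cf_e_pp (x : Pt 2) : cellFrom x ∅ ![pls, pls] = (x, ∅) :=
  cellFrom_eq _ _ _ _ _ (fun j => by fin_cases j <;> simp) (by decide)

/-- Evaluation of cup products on 2-cells, 1-cells, 0-cells. -/
lemma cup0_square (α β : LatCochain 2) (x : Pt 2) :
    latCup 0 α β (x, Finset.univ) =
      α (x + e11, ∅) * β (x, Finset.univ)
      + α (x + e10, {1}) * β (x, {0})
      + α (x + e01, {0}) * β (x, {1})
      + α (x, Finset.univ) * β (x, ∅) := by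
  unfold latCup
  rw [Finset.filter_congr_decidable]
  rw [show (Finset.univ.filter
      (fun p : (Fin 2 → Sgn) × (Fin 2 → Sgn) => IntPairS 0 (Finset.univ) p.1 p.2))
    = {(![pls,pls],![dot,dot]), (![pls,dot],![dot,mns]), (![dot,pls],![mns,dot]),
       (![dot,dot],![mns,mns])} from by decide]
  rw [Finset.sum_insert (by decide), Finset.sum_insert (by decide),
    Finset.sum_insert (by decide), Finset.sum_singleton]
  simp only [cf_u_pp, cf_u_pd, cf_u_dp, cf_u_dd, cf_u_dm, cf_u_md, cf_u_mm]
  ring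

lemma cup0_edge0 (α β : LatCochain 2) (x : Pt 2) :
    latCup 0 α β (x, {0}) =
      α (x + e10, ∅) * β (x, {0}) + α (x, {0}) * β (x, ∅) := by
  unfold latCup
  rw [Finset.filter_congr_decidable]
  rw [show (Finset.univ.filter
      (fun p : (Fin 2 → Sgn) × (Fin 2 → Sgn) => IntPairS 0 ({0} : Finset (Fin 2)) p.1 p.2))
    = {(![pls,pls],![dot,pls]), (![dot,pls],![mns,pls])} from by decide]
  rw [Finset.sum_insert (by decide), Finset.sum_singleton]
  simp only [cf_0_pp, cf_0_dp, cf_0_mp]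

lemma cup0_edge1 (α β : LatCochain 2) (x : Pt 2) :
    latCup 0 α β (x, {1}) =
      α (x + e01, ∅) * β (x, {1}) + α (x, {1}) * β (x, ∅) := by
  unfold latCup
  rw [Finset.filter_congr_decidable]
  rw [show (Finset.univ.filter
      (fun p : (Fin 2 → Sgn) × (Fin 2 → Sgn) => IntPairS 0 ({1} : Finset (Fin 2)) p.1 p.2))
    = {(![pls,pls],![pls,dot]), (![pls,dot],![pls,mns])} from by decide]
  rw [Finset.sum_insert (by decide), Finset.sum_singleton]
  simp only [cf_1_pp, cf_1_pd, cf_1_pm]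

lemma cup0_vertex (α β : LatCochain 2) (x : Pt 2) :
    latCup 0 α β (x, ∅) = α (x, ∅) * β (x, ∅) := by
  unfold latCup
  rw [Finset.filter_congr_decidable]
  rw [show (Finset.univ.filter
      (fun p : (Fin 2 → Sgn) × (Fin 2 → Sgn) => IntPairS 0 (∅ : Finset (Fin 2)) p.1 p.2))
    = {(![pls,pls],![pls,pls])} from by decide]
  rw [Finset.sum_singleton]
  simp only [cf_e_pp]

lemma cup1_square (α β : LatCochain 2) (x : Pt 2) :
    latCup 1 α β (x, Finset.univ) =
      α (x, Finset.univ) * β (x + e01, {0})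
      + α (x, Finset.univ) * β (x, {1})
      + α (x, {0}) * β (x, Finset.univ)
      + α (x + e10, {1}) * β (x, Finset.univ) := by
  unfold latCup
  rw [Finset.filter_congr_decidable]
  rw [show (Finset.univ.filter
      (fun p : (Fin 2 → Sgn) × (Fin 2 → Sgn) => IntPairS 1 (Finset.univ) p.1 p.2))
    = {(![dot,dot],![dot,pls]), (![dot,dot],![mns,dot]), (![dot,mns],![dot,dot]),
       (![pls,dot],![dot,dot])} from by decide]
  rw [Finset.sum_insert (by decide), Finset.sum_insert (by decide),
    Finset.sum_insert (by decide), Finset.sum_singleton]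
  simp only [cf_u_dd, cf_u_dp, cf_u_md, cf_u_dm, cf_u_pd]
  ring

/-- Evaluation of `ofVertex` and its coboundary. -/
@[simp] lemma ofv_vertex (f : Pt 2 → ZMod 2) (x : Pt 2) : ofVertex f (x, ∅) = f x := by
  simp [ofVertex]
@[simp] lemma ofv_edge0 (f : Pt 2 → ZMod 2) (x : Pt 2) : ofVertex f (x, {0}) = 0 := by
  simp [ofVertex, show ({0} : Finset (Fin 2)) ≠ ∅ from by decide]
@[simp] lemma ofv_edge1 (f : Pt 2 → ZMod 2) (x : Pt 2) : ofVertex f (x, {1}) = 0 := by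
  simp [ofVertex, show ({1} : Finset (Fin 2)) ≠ ∅ from by decide]
@[simp] lemma ofv_square (f : Pt 2 → ZMod 2) (x : Pt 2) : ofVertex f (x, Finset.univ) = 0 := by
  simp [ofVertex, show (Finset.univ : Finset (Fin 2)) ≠ ∅ from by decide]

lemma update_eq_e10 (x : Pt 2) : Function.update x 0 (x 0 + 1) = x + e10 := by
  funext j; fin_cases j <;> simp [Function.update, e10]
lemma update_eq_e01 (x : Pt 2) : Function.update x 1 (x 1 + 1) = x + e01 := by
  funext j; fin_cases j <;> simp [Function.update, e01]

@[simp] lemma dOf_vertex (α : LatCochain 2) (x : Pt 2) : latDelta α (x, ∅) = 0 := by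
  simp [latDelta]

@[simp] lemma dOf_edge0 (f : Pt 2 → ZMod 2) (x : Pt 2) :
    latDelta (ofVertex f) (x, {0}) = f x + f (x + e10) := by
  unfold latDelta
  rw [Finset.sum_singleton]
  simp [show ({0} : Finset (Fin 2)).erase 0 = ∅ from by decide, update_eq_e10]

@[simp] lemma dOf_edge1 (f : Pt 2 → ZMod 2) (x : Pt 2) :
    latDelta (ofVertex f) (x, {1}) = f x + f (x + e01) := by
  unfold latDelta
  rw [Finset.sum_singleton]
  simp [show ({1} : Finset (Fin 2)).erase 1 = ∅ from by decide, update_eq_e01]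

@[simp] lemma dOf_square (f : Pt 2 → ZMod 2) (x : Pt 2) :
    latDelta (ofVertex f) (x, Finset.univ) = 0 := by
  unfold latDelta
  rw [show (Finset.univ : Finset (Fin 2)) = {0, 1} from by decide]
  rw [Finset.sum_insert (by decide), Finset.sum_singleton]
  simp [show ({0, 1} : Finset (Fin 2)).erase 0 = {1} from by decide,
    show ({0, 1} : Finset (Fin 2)).erase 1 = {0} from by decide]

@[simp] lemma ofVertex_add (f g : Pt 2 → ZMod 2) :
    ofVertex f + ofVertex g = ofVertex (fun p => f p + g p) := by
  funext w; by_cases h : w.2 = ∅ <;> simp [ofVertex, h]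

/-- Telescoping functions. -/
def Ff (a v : Pt 2 → ZMod 2) (x : Pt 2) : ZMod 2 :=
  a x * (a (x + e01) * (v x + v (x + e01)) + v x * v (x + e01) + v x)
def Gf (a v : Pt 2 → ZMod 2) (x : Pt 2) : ZMod 2 :=
  a x * (a (x + e10) * (v x + v (x + e10)) + v x * v (x + e10) + v x)

lemma key (a v : Pt 2 → ZMod 2) (x : Pt 2) :
    latCup 0
        (latCup 0 (ofVertex a + ofVertex v) (latDelta (ofVertex a + ofVertex v)))
        (latDelta (ofVertex a + ofVertex v)) (x, Finset.univ)
      + latCup 0 (latCup 0 (ofVertex a) (latDelta (ofVertex a)))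
          (latDelta (ofVertex a)) (x, Finset.univ)
      + (latCup 0 (latCup 0 (latDelta (ofVertex a)) (ofVertex v)) (latDelta (ofVertex a))
          + latCup 1 (latDelta (ofVertex v))
              (latCup 0 (latDelta (ofVertex a) + latDelta (ofVertex v))
                (latDelta (ofVertex a)))
          + latCup 0 (latCup 0 (latDelta (ofVertex a)) (latDelta (ofVertex v))) (ofVertex v)
          + latCup 0 (latCup 0 (ofVertex v) (latDelta (ofVertex v)))
              (latDelta (ofVertex v))) (x, Finset.univ)
    = Ff a v x + Ff a v (x + e10) + Gf a v x + Gf a v (x + e01) := by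
  simp only [ofVertex_add, Pi.add_apply, cup0_square, cup0_edge0, cup0_edge1, cup0_vertex,
    cup1_square, dOf_edge0, dOf_edge1, dOf_square, dOf_vertex, ofv_vertex, ofv_edge0,
    ofv_edge1, ofv_square, add_e10_e01, add_e01_e10, Ff, Gf, mul_zero, zero_mul, add_zero,
    zero_add, mul_one, one_mul]
  generalize a x = A0
  generalize a (x + e10) = A1
  generalize a (x + e01) = A2
  generalize a (x + e11) = A3
  generalize v x = V0
  generalize v (x + e10) = V1
  generalize v (x + e01) = V2
  generalize v (x + e11) = V3
  revert A0 A1 A2 A3 V0 V1 V2 V3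
  decide

/-- Vanishing of the integrands away from the supports. -/
lemma van1 (f : Pt 2 → ZMod 2) (x : Pt 2) (h00 : f x = 0) (h10 : f (x + e10) = 0)
    (h01 : f (x + e01) = 0) (h11 : f (x + e11) = 0) :
    latCup 0 (latCup 0 (ofVertex f) (latDelta (ofVertex f))) (latDelta (ofVertex f))
      (x, Finset.univ) = 0 := by
  simp only [cup0_square, cup0_edge0, cup0_edge1, cup0_vertex, dOf_edge0, dOf_edge1,
    dOf_square, dOf_vertex, ofv_vertex, ofv_edge0, ofv_edge1, ofv_square,
    add_e10_e01, add_e01_e10]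
  simp [h00, h10, h01, h11]

lemma van3 (a v : Pt 2 → ZMod 2) (x : Pt 2)
    (h1 : a x = 0) (h2 : v x = 0) (h3 : a (x + e10) = 0) (h4 : v (x + e10) = 0)
    (h5 : a (x + e01) = 0) (h6 : v (x + e01) = 0) (h7 : a (x + e11) = 0)
    (h8 : v (x + e11) = 0) :
    (latCup 0 (latCup 0 (latDelta (ofVertex a)) (ofVertex v)) (latDelta (ofVertex a))
      + latCup 1 (latDelta (ofVertex v))
          (latCup 0 (latDelta (ofVertex a) + latDelta (ofVertex v))
            (latDelta (ofVertex a)))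
      + latCup 0 (latCup 0 (latDelta (ofVertex a)) (latDelta (ofVertex v))) (ofVertex v)
      + latCup 0 (latCup 0 (ofVertex v) (latDelta (ofVertex v)))
          (latDelta (ofVertex v))) (x, Finset.univ) = 0 := by
  simp only [Pi.add_apply, cup0_square, cup0_edge0, cup0_edge1, cup0_vertex, cup1_square,
    dOf_edge0, dOf_edge1, dOf_square, dOf_vertex, ofv_vertex, ofv_edge0, ofv_edge1,
    ofv_square, add_e10_e01, add_e01_e10]
  simp [h1, h2, h3, h4, h5, h6, h7, h8]

/-- Support of pointwise sums. -/
lemma supp_add (p q : Pt 2 → ZMod 2) :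
    (Function.support fun x => p x + q x) ⊆ Function.support p ∪ Function.support q := by
  intro x hx
  by_contra hc
  simp only [Set.mem_union, Function.mem_support, not_or, not_not] at hc
  exact hx (by simp [hc.1, hc.2])

/-- Assembly: if the pointwise sum of three finitely supported functions telescopes,
the finsum identity holds. -/
lemma assemble (g1 g2 g3 F G : Pt 2 → ZMod 2)
    (hs1 : (Function.support g1).Finite) (hs2 : (Function.support g2).Finite)
    (hs3 : (Function.support g3).Finite)
    (hF : (Function.support F).Finite) (hG : (Function.support G).Finite)
    (hkey : ∀ x, g1 x + g2 x + g3 x = F x + F (x + e10) + G x + G (x + e01)) :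
    (∑ᶠ x, g1 x) + (∑ᶠ x, g2 x) = ∑ᶠ x, g3 x := by
  have h2 : ∀ z : ZMod 2, z + z = 0 := by decide
  have hF10 : (Function.support fun x => F (x + e10)).Finite := by
    have : (Function.support fun x => F (x + e10)) = (fun x : Pt 2 => x + e10) ⁻¹' Function.support F := by
      ext y; simp [Function.mem_support]
    rw [this]
    exact hF.preimage ((add_left_injective e10).injOn)
  have hG01 : (Function.support fun x => G (x + e01)).Finite := by
    have : (Function.support fun x => G (x + e01)) = (fun x : Pt 2 => x + e01) ⁻¹' Function.support G := by
      ext y; simp [Function.mem_support]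
    rw [this]
    exact hG.preimage ((add_left_injective e01).injOn)
  have r1 : (∑ᶠ x, F (x + e10)) = ∑ᶠ x, F x := by
    have := finsum_comp_equiv (Equiv.addRight e10) (f := F)
    simpa using this
  have r2 : (∑ᶠ x, G (x + e01)) = ∑ᶠ x, G x := by
    have := finsum_comp_equiv (Equiv.addRight e01) (f := G)
    simpa using this
  have hs12 : (Function.support fun x => g1 x + g2 x).Finite :=
    (hs1.union hs2).subset (supp_add _ _)
  have hFF : (Function.support fun x => F x + F (x + e10)).Finite :=
    (hF.union hF10).subset (supp_add _ _)
  have hFFG : (Function.support fun x => F x + F (x + e10) + G x).Finite :=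
    (hFF.union hG).subset (supp_add _ _)
  have hsum : (∑ᶠ x, g1 x) + (∑ᶠ x, g2 x) + (∑ᶠ x, g3 x) = 0 := by
    rw [← finsum_add_distrib hs1 hs2, ← finsum_add_distrib hs12 hs3]
    rw [finsum_congr hkey]
    rw [finsum_add_distrib hFFG hG01, finsum_add_distrib hFF hG,
      finsum_add_distrib hF hF10, r1, r2]
    rw [h2]
    simp [h2]
  calc (∑ᶠ x, g1 x) + (∑ᶠ x, g2 x)
      = (∑ᶠ x, g1 x) + (∑ᶠ x, g2 x) + ((∑ᶠ x, g3 x) + (∑ᶠ x, g3 x)) := by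
        rw [h2, add_zero]
    _ = ((∑ᶠ x, g1 x) + (∑ᶠ x, g2 x) + (∑ᶠ x, g3 x)) + (∑ᶠ x, g3 x) := by ring
    _ = ∑ᶠ x, g3 x := by rw [hsum, zero_add]

/-- For finitely supported `ℤ₂`-valued `0`-cochains `ã`, `v` on the
cubical lattice `ℤ²` (with `∪ = ∪₀` and `∫` the sum over all `2`-cells):
`∫ ((ã+v) ∪ δ(ã+v)) ∪ δ(ã+v) + ∫ (ã ∪ δã) ∪ δã
  = ∫ [ (δã ∪ v) ∪ δã + δv ∪₁ ((δã + δv) ∪ δã) + (δã ∪ δv) ∪ v + (v ∪ δv) ∪ δv ]`. -/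
theorem doubleSemion_variation (a v : Pt 2 → ZMod 2)
    (ha : (Function.support a).Finite) (hv : (Function.support v).Finite) :
    intLat (latCup 0
        (latCup 0 (ofVertex a + ofVertex v) (latDelta (ofVertex a + ofVertex v)))
        (latDelta (ofVertex a + ofVertex v)))
      + intLat (latCup 0 (latCup 0 (ofVertex a) (latDelta (ofVertex a)))
          (latDelta (ofVertex a)))
    = intLat
        (latCup 0 (latCup 0 (latDelta (ofVertex a)) (ofVertex v)) (latDelta (ofVertex a))
          + latCup 1 (latDelta (ofVertex v))
              (latCup 0 (latDelta (ofVertex a) + latDelta (ofVertex v))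
                (latDelta (ofVertex a)))
          + latCup 0 (latCup 0 (latDelta (ofVertex a)) (latDelta (ofVertex v))) (ofVertex v)
          + latCup 0 (latCup 0 (ofVertex v) (latDelta (ofVertex v)))
              (latDelta (ofVertex v))) := by
  have hU : (Function.support a ∪ Function.support v).Finite := ha.union hv
  set U : Set (Pt 2) := Function.support a ∪ Function.support v with hUdef
  set T : Set (Pt 2) := U ∪ (fun y => y - e10) '' U ∪ (fun y => y - e01) '' U
      ∪ (fun y => y - e11) '' U with hTdef
  have hT : T.Finite := ((hU.union (hU.image _)).union (hU.image _)).union (hU.image _)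
  have hsub0 : U ⊆ T := fun y hy => Or.inl (Or.inl (Or.inl hy))
  have hsub1 : (fun y => y - e10) '' U ⊆ T := fun y hy => Or.inl (Or.inl (Or.inr hy))
  have hsub2 : (fun y => y - e01) '' U ⊆ T := fun y hy => Or.inl (Or.inr hy)
  have hsub3 : (fun y => y - e11) '' U ⊆ T := fun y hy => Or.inr hy
  have hmem : ∀ (c : Pt 2) (x : Pt 2), x + c ∈ U → x ∈ (fun y => y - c) '' U :=
    fun c x hc => ⟨x + c, hc, by simp⟩
  have hzero : ∀ x ∉ T, a x = 0 ∧ v x = 0 ∧ a (x + e10) = 0 ∧ v (x + e10) = 0 ∧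
      a (x + e01) = 0 ∧ v (x + e01) = 0 ∧ a (x + e11) = 0 ∧ v (x + e11) = 0 := by
    intro x hx
    refine ⟨?_, ?_, ?_, ?_, ?_, ?_, ?_, ?_⟩
    · by_contra h; exact hx (hsub0 (Or.inl h))
    · by_contra h; exact hx (hsub0 (Or.inr h))
    · by_contra h; exact hx (hsub1 (hmem e10 x (Or.inl h)))
    · by_contra h; exact hx (hsub1 (hmem e10 x (Or.inr h)))
    · by_contra h; exact hx (hsub2 (hmem e01 x (Or.inl h)))
    · by_contra h; exact hx (hsub2 (hmem e01 x (Or.inr h)))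
    · by_contra h; exact hx (hsub3 (hmem e11 x (Or.inl h)))
    · by_contra h; exact hx (hsub3 (hmem e11 x (Or.inr h)))
  unfold intLat
  refine assemble _ _ _ (Ff a v) (Gf a v) ?_ ?_ ?_ ?_ ?_ (fun x => key a v x)
  · refine hT.subset ?_
    rw [Function.support_subset_iff']
    intro x hx
    obtain ⟨h1, h2, h3, h4, h5, h6, h7, h8⟩ := hzero x hx
    rw [ofVertex_add]
    exact van1 (fun p => a p + v p) x (by simp [h1, h2]) (by simp [h3, h4])
      (by simp [h5, h6]) (by simp [h7, h8])
  · refine hT.subset ?_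
    rw [Function.support_subset_iff']
    intro x hx
    obtain ⟨h1, h2, h3, h4, h5, h6, h7, h8⟩ := hzero x hx
    exact van1 a x h1 h3 h5 h7
  · refine hT.subset ?_
    rw [Function.support_subset_iff']
    intro x hx
    obtain ⟨h1, h2, h3, h4, h5, h6, h7, h8⟩ := hzero x hx
    exact van3 a v x h1 h2 h3 h4 h5 h6 h7 h8
  · refine ha.subset ?_
    rw [Function.support_subset_iff']
    intro x hx
    have : a x = 0 := Function.notMem_support.mp hx
    simp [Ff, this]
  · refine ha.subset ?_
    rw [Function.support_subset_iff']
    intro x hx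
    have : a x = 0 := Function.notMem_support.mp hx
    simp [Gf, this]
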